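/- If f : [a,b] → ℝ is absolutely continuous with f' ∈ L^p([a,b]) for some 1 < p < ∞ and q is the conjugate exponent, then |∫_a^b f(x) dx − (b-a)(f(a)+f(b))/2| ≤ (1/2)(1/(q+1))^{1/q} ‖f'‖_p (b-a)^{1+1/q}. -/

import Mathlib

open MeasureTheory intervalIntegral

lemma fubini_aux (a b : ℝ) (g : ℝ → ℝ)
    (hg : IntervalIntegrable g volume a b) :
    (∫ x in Set.Ioc a b, (∫ t in a..x, g t)) = ∫ t in Set.Ioc a b, (b - t) * g t := by
  set μ := volume.restrict (Set.Ioc a b) with hμ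
  have hgi : IntegrableOn g (Set.Ioc a b) := hg.1
  have hμuniv : μ Set.univ ≠ ⊤ := by
    simp [hμ, Real.volume_Ioc]
  have hmap : Integrable g (Measure.map Prod.snd (μ.prod μ)) := by
    rw [Measure.map_snd_prod]
    exact hgi.smul_measure hμuniv
  have hbase : Integrable (fun p : ℝ × ℝ => g p.2) (μ.prod μ) :=
    (integrable_map_measure hmap.aestronglyMeasurable
      measurable_snd.aemeasurable).mp hmap
  have hS : MeasurableSet {p : ℝ × ℝ | p.2 ≤ p.1} :=
    measurableSet_le measurable_snd measurable_fst
  set h : ℝ → ℝ → ℝ := fun x t => if t ≤ x then g t else 0 with hh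
  have huncurry : Function.uncurry h = Set.indicator {p : ℝ × ℝ | p.2 ≤ p.1}
      (fun p => g p.2) := by
    funext p
    simp [hh, Function.uncurry, Set.indicator]
  have hint : Integrable (Function.uncurry h) (μ.prod μ) := by
    rw [huncurry]
    exact hbase.indicator hS
  have hswap := integral_integral_swap hint
  have hL : (∫ x, ∫ t, h x t ∂μ ∂μ) = ∫ x in Set.Ioc a b, (∫ t in a..x, g t) := by
    refine setIntegral_congr_fun measurableSet_Ioc fun x hx => ?_
    have : (fun t => h x t) = Set.indicator (Set.Iic x) g := by
      funext t; simp [hh, Set.indicator, Set.mem_Iic]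
    rw [this, MeasureTheory.integral_indicator measurableSet_Iic, hμ,
      Measure.restrict_restrict measurableSet_Iic]
    have : Set.Iic x ∩ Set.Ioc a b = Set.Ioc a x := by
      ext t
      simp only [Set.mem_inter_iff, Set.mem_Iic, Set.mem_Ioc]
      exact ⟨fun ⟨h1, h2, _⟩ => ⟨h2, h1⟩, fun ⟨h1, h2⟩ => ⟨h2, h1, h2.trans hx.2⟩⟩
    rw [this, intervalIntegral.integral_of_le hx.1.le]
  have hR : (∫ t, ∫ x, h x t ∂μ ∂μ) = ∫ t in Set.Ioc a b, (b - t) * g t := by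
    refine setIntegral_congr_fun measurableSet_Ioc fun t ht => ?_
    have : (fun x => h x t) = Set.indicator (Set.Ici t) (fun _ => g t) := by
      funext x; simp [hh, Set.indicator, Set.mem_Ici]
    rw [this, MeasureTheory.integral_indicator measurableSet_Ici, hμ,
      Measure.restrict_restrict measurableSet_Ici]
    have h1 : Set.Ici t ∩ Set.Ioc a b = Set.Icc t b := by
      ext x
      simp only [Set.mem_inter_iff, Set.mem_Ici, Set.mem_Ioc, Set.mem_Icc]
      exact ⟨fun ⟨h1, _, h3⟩ => ⟨h1, h3⟩, fun ⟨h1, h2⟩ => ⟨h1, ht.1.trans_le h1, h2⟩⟩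
    rw [h1, setIntegral_const, Real.volume_real_Icc_of_le (by linarith [ht.2]), smul_eq_mul]
  rw [← hL, hswap, hR]

/-- Trapezoidal rule error bound for `f` absolutely continuous with `f' ∈ L^p`, `1 < p < ∞`. -/
theorem trapezoid_error_Lp
    (a b : ℝ) (hab : a < b) (p q : ℝ) (hp : 1 < p) (hpq : 1 / p + 1 / q = 1)
    (f g : ℝ → ℝ)
    (hg : IntervalIntegrable g volume a b)
    (hFTC : ∀ x ∈ Set.Icc a b, f x = f a + ∫ t in a..x, g t)
    (hgp : IntervalIntegrable (fun x => |g x| ^ p) volume a b) :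
    |(∫ x in a..b, f x) - (b - a) * (f a + f b) / 2|
      ≤ (1 / 2) * (1 / (q + 1)) ^ (1 / q) * (∫ x in a..b, |g x| ^ p) ^ (1 / p) *
          (b - a) ^ (1 + 1 / q) := by
  have hpq' : p.HolderConjugate q := Real.holderConjugate_iff.mpr ⟨hp, by simpa [one_div] using hpq⟩
  have hq1 : 1 < q := (Real.holderConjugate_iff.mp hpq'.symm).1
  have hq0 : 0 < q := by linarith
  have hc : 0 < b - a := by linarith
  set K : ℝ → ℝ := fun t => (a + b) / 2 - t with hK
  have hKcont : Continuous K := by continuity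
  -- integrability facts
  have hKg : IntervalIntegrable (fun t => K t * g t) volume a b := by
    have := hg.continuousOn_mul hKcont.continuousOn
    exact this
  have hbg : IntervalIntegrable (fun t => (b - t) * g t) volume a b := by
    have : Continuous (fun t : ℝ => b - t) := by continuity
    exact hg.continuousOn_mul this.continuousOn
  -- Step 1: key identity
  have key : (∫ x in a..b, f x) - (b - a) * (f a + f b) / 2
      = ∫ t in a..b, K t * g t := by
    have hF : IntervalIntegrable (fun x => ∫ t in a..x, g t) volume a b :=
      (intervalIntegral.continuousOn_primitive_interval' hg Set.left_mem_uIcc).intervalIntegrable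
    have h1 : (∫ x in a..b, f x)
        = ∫ x in a..b, (f a + ∫ t in a..x, g t) := by
      refine intervalIntegral.integral_congr fun x hx => ?_
      rw [Set.uIcc_of_le hab.le] at hx
      exact hFTC x hx
    have h2 : (∫ x in a..b, (f a + ∫ t in a..x, g t))
        = (b - a) * f a + ∫ x in a..b, (∫ t in a..x, g t) := by
      rw [intervalIntegral.integral_add (intervalIntegrable_const) hF,
        intervalIntegral.integral_const, smul_eq_mul]
    have h3 : (∫ x in a..b, (∫ t in a..x, g t))
        = ∫ t in a..b, (b - t) * g t := by
      rw [intervalIntegral.integral_of_le hab.le, intervalIntegral.integral_of_le hab.le]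
      exact fubini_aux a b g hg
    have hfb : f b = f a + ∫ t in a..b, g t :=
      hFTC b (Set.right_mem_Icc.mpr hab.le)
    have h4 : (∫ t in a..b, (b - t) * g t) - (b - a) / 2 * ∫ t in a..b, g t
        = ∫ t in a..b, K t * g t := by
      rw [← intervalIntegral.integral_const_mul, ← intervalIntegral.integral_sub hbg
        (hg.const_mul _)]
      refine intervalIntegral.integral_congr fun t _ => ?_
      simp only [hK]
      ring
    rw [h1, h2, h3, hfb]
    rw [← h4]
    ring
  rw [key]
  -- Step 2: Hölder
  set μ := volume.restrict (Set.Ioc a b) with hμ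
  haveI : IsFiniteMeasure μ := by
    constructor
    simp [hμ, Real.volume_Ioc]
  have hgm : AEStronglyMeasurable g μ := hg.1.aestronglyMeasurable
  have hgLp : MemLp g (ENNReal.ofReal p) μ := by
    have A : ENNReal.ofReal p ≠ 0 := by
      simp [ENNReal.ofReal_eq_zero, not_le]; linarith
    have B : ENNReal.ofReal p ≠ ⊤ := ENNReal.ofReal_ne_top
    rw [← memLp_norm_rpow_iff hgm A B, ENNReal.toReal_ofReal (by linarith : (0:ℝ) ≤ p),
      ENNReal.div_self A B, memLp_one_iff_integrable]
    have : (fun x => ‖g x‖ ^ p) = fun x => |g x| ^ p := by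
      funext x; rw [Real.norm_eq_abs]
    rw [this]
    exact hgp.1
  have hKLq : MemLp K (ENNReal.ofReal q) μ := by
    refine (memLp_top_of_bound hKcont.aestronglyMeasurable (b - a) ?_).mono_exponent
      le_top
    filter_upwards [self_mem_ae_restrict measurableSet_Ioc] with x hx
    rw [Real.norm_eq_abs, abs_le]
    obtain ⟨hx1, hx2⟩ := hx
    constructor <;> simp only [hK] <;> linarith
  -- Hölder's inequality
  have holder : |∫ t in a..b, K t * g t|
      ≤ (∫ t in Set.Ioc a b, |K t| ^ q) ^ (1 / q)
        * (∫ t in Set.Ioc a b, |g t| ^ p) ^ (1 / p) := by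
    rw [intervalIntegral.integral_of_le hab.le]
    calc |∫ t in Set.Ioc a b, K t * g t| ≤ ∫ t in Set.Ioc a b, ‖K t * g t‖ := by
          rw [← Real.norm_eq_abs]
          exact norm_integral_le_integral_norm _
      _ = ∫ t, ‖K t‖ * ‖g t‖ ∂μ := by
          simp_rw [norm_mul]; rfl
      _ ≤ (∫ t, ‖K t‖ ^ q ∂μ) ^ (1 / q) * (∫ t, ‖g t‖ ^ p ∂μ) ^ (1 / p) :=
          integral_mul_norm_le_Lp_mul_Lq hpq'.symm hKLq hgLp
      _ = _ := by simp_rw [Real.norm_eq_abs]; rfl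
  -- compute the kernel integral
  set m : ℝ := (a + b) / 2 with hm
  have hma : a ≤ m := by simp only [hm]; linarith
  have hmb : m ≤ b := by simp only [hm]; linarith
  have hKq_cont : Continuous fun t => |K t| ^ q := by
    rw [continuous_iff_continuousAt]
    intro x
    exact (Real.continuousAt_rpow_const _ _ (Or.inr hq0.le)).comp hKcont.abs.continuousAt
  have e1 : (∫ t in a..m, |K t| ^ q) = ((b - a) / 2) ^ (q + 1) / (q + 1) := by
    have hcongr : ∀ t ∈ Set.uIcc a m, |K t| ^ q = (fun y : ℝ => y ^ q) (m - t) := by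
      intro t ht
      rw [Set.uIcc_of_le hma] at ht
      simp only [hK, hm]
      rw [abs_of_nonneg (by linarith [ht.2])]
    rw [intervalIntegral.integral_congr hcongr,
      intervalIntegral.integral_comp_sub_left (fun y : ℝ => y ^ q) m, sub_self,
      integral_rpow (Or.inl (by linarith : (-1 : ℝ) < q)),
      Real.zero_rpow (by linarith : q + 1 ≠ 0)]
    have : m - a = (b - a) / 2 := by rw [hm]; ring
    rw [this, sub_zero]
  have e2 : (∫ t in m..b, |K t| ^ q) = ((b - a) / 2) ^ (q + 1) / (q + 1) := by
    have hcongr : ∀ t ∈ Set.uIcc m b, |K t| ^ q = (fun y : ℝ => y ^ q) (t - m) := by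
      intro t ht
      rw [Set.uIcc_of_le hmb] at ht
      simp only [hK, hm]
      rw [abs_of_nonpos (by linarith [ht.1]), neg_sub]
    rw [intervalIntegral.integral_congr hcongr,
      intervalIntegral.integral_comp_sub_right (fun y : ℝ => y ^ q) m, sub_self,
      integral_rpow (Or.inl (by linarith : (-1 : ℝ) < q)),
      Real.zero_rpow (by linarith : q + 1 ≠ 0)]
    have : b - m = (b - a) / 2 := by rw [hm]; ring
    rw [this, sub_zero]
  have hIK : (∫ t in Set.Ioc a b, |K t| ^ q)
      = 2 * ((b - a) / 2) ^ (q + 1) / (q + 1) := by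
    rw [← intervalIntegral.integral_of_le hab.le,
      ← intervalIntegral.integral_add_adjacent_intervals
        (hKq_cont.intervalIntegrable a m) (hKq_cont.intervalIntegrable m b),
      e1, e2]
    ring
  -- value of the kernel Lq norm
  have h2q : (0 : ℝ) < (2 : ℝ) ^ q := Real.rpow_pos_of_pos (by norm_num) q
  have hq1' : (0 : ℝ) < q + 1 := by linarith
  have hX : 2 * ((b - a) / 2) ^ (q + 1) / (q + 1)
      = (b - a) ^ (q + 1) / ((2 : ℝ) ^ q * (q + 1)) := by
    rw [Real.div_rpow hc.le (by norm_num : (0 : ℝ) ≤ 2),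
      Real.rpow_add (by norm_num : (0 : ℝ) < 2) q 1, Real.rpow_one]
    field_simp
  have hval : ((∫ t in Set.Ioc a b, |K t| ^ q)) ^ (1 / q)
      = 1 / 2 * (1 / (q + 1)) ^ (1 / q) * (b - a) ^ (1 + 1 / q) := by
    rw [hIK, hX, Real.div_rpow (Real.rpow_nonneg hc.le _) (by positivity),
      Real.mul_rpow h2q.le hq1'.le, ← Real.rpow_mul hc.le,
      ← Real.rpow_mul (by norm_num : (0 : ℝ) ≤ 2), mul_one_div_cancel hq0.ne',
      Real.rpow_one, Real.div_rpow zero_le_one hq1'.le, Real.one_rpow]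
    have heq : (q + 1) * (1 / q) = 1 + 1 / q := by field_simp
    rw [heq]
    have hp1 : (0 : ℝ) < (q + 1) ^ (1 / q) := Real.rpow_pos_of_pos hq1' _
    field_simp
  have hgint : (∫ t in Set.Ioc a b, |g t| ^ p) = ∫ x in a..b, |g x| ^ p :=
    (intervalIntegral.integral_of_le hab.le).symm
  calc |∫ t in a..b, K t * g t|
      ≤ (∫ t in Set.Ioc a b, |K t| ^ q) ^ (1 / q)
        * (∫ t in Set.Ioc a b, |g t| ^ p) ^ (1 / p) := holder
    _ = 1 / 2 * (1 / (q + 1)) ^ (1 / q) * (∫ x in a..b, |g x| ^ p) ^ (1 / p) *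
          (b - a) ^ (1 + 1 / q) := by
        rw [hval, hgint]; ring
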